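/- Let I ⊆ ℝ be an open interval and let R : I → ℝ^{p×p} be a differentiable map such that R(t) is symmetric positive definite for every t ∈ I. Define S(t) = R(t)^{-1/2}, the inverse of the unique symmetric positive definite square root of R(t). Then S is differentiable on I, S(t) is symmetric for every t, and for every t ∈ I the derivative satisfies S'(t) S(t) + S(t) S'(t) = −R(t)^{-1} R'(t) R(t)^{-1}. -/

import Mathlib

open Matrix Filter Asymptotics Topology

open scoped MatrixOrder in
private lemma aux_eq_of_sq_eq_sq {p : ℕ} {A B : Matrix (Fin p) (Fin p) ℝ} (hA : A.PosSemidef)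
    (hB : B.PosSemidef) (h : A ^ 2 = B ^ 2) : A = B :=
  (CFC.sq_eq_sq_iff A B hA.nonneg hB.nonneg).1 h

attribute [local instance] Matrix.linftyOpNormedRing Matrix.linftyOpNormedAlgebra

section Aux

variable {p : ℕ}

private lemma aux_hasDerivAt_of_entries {f : ℝ → Matrix (Fin p) (Fin p) ℝ}
    {f' : Matrix (Fin p) (Fin p) ℝ} {t : ℝ}
    (h : ∀ i j, HasDerivAt (fun s => f s i j) (f' i j) t) : HasDerivAt f f' t := by
  have key : HasDerivAt
      (fun s => ∑ i : Fin p, ∑ j : Fin p, (f s i j) • Matrix.single i j (1:ℝ))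
      (∑ i : Fin p, ∑ j : Fin p, (f' i j) • Matrix.single i j (1:ℝ)) t :=
    HasDerivAt.fun_sum fun i _ => HasDerivAt.fun_sum fun j _ => (h i j).smul_const _
  have e : ∀ A : Matrix (Fin p) (Fin p) ℝ,
      ∑ i : Fin p, ∑ j : Fin p, (A i j) • Matrix.single i j (1:ℝ) = A := by
    intro A
    conv_rhs => rw [matrix_eq_sum_single A]
    refine Finset.sum_congr rfl fun i _ => Finset.sum_congr rfl fun j _ => ?_
    rw [smul_single, smul_eq_mul, mul_one]
  have e2 : (fun s => ∑ i : Fin p, ∑ j : Fin p, (f s i j) • Matrix.single i j (1:ℝ)) = f := by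
    funext s; exact e (f s)
  rw [e2, e f'] at key
  exact key

private lemma aux_entry_hasDerivAt {f : ℝ → Matrix (Fin p) (Fin p) ℝ}
    {f' : Matrix (Fin p) (Fin p) ℝ} {t : ℝ} (h : HasDerivAt f f' t) (i j : Fin p) :
    HasDerivAt (fun s => f s i j) (f' i j) t := by
  let l : Matrix (Fin p) (Fin p) ℝ →ₗ[ℝ] ℝ :=
    { toFun := fun A => A i j
      map_add' := fun _ _ => rfl
      map_smul' := fun _ _ => rfl }
  exact (LinearMap.toContinuousLinearMap l).hasFDerivAt.comp_hasDerivAt t h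

private lemma aux_hasDerivAt_codRestrict {q : Submodule ℝ (Matrix (Fin p) (Fin p) ℝ)}
    {f : ℝ → q} {f' : q} {t : ℝ}
    (h : HasDerivAt (fun s => (f s : Matrix (Fin p) (Fin p) ℝ))
      ((f' : Matrix (Fin p) (Fin p) ℝ)) t) : HasDerivAt f f' t := by
  replace h := hasDerivAt_iff_isLittleO.1 h
  refine hasDerivAt_iff_isLittleO.2 ?_
  rw [← isLittleO_norm_left] at h ⊢
  exact h

private lemma aux_hasStrictFDerivAt_codRestrict {E : Type*} [NormedAddCommGroup E]
    [NormedSpace ℝ E] {q : Submodule ℝ (Matrix (Fin p) (Fin p) ℝ)}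
    {f : E → q} {f' : E →L[ℝ] q} {a : E}
    (h : HasStrictFDerivAt (fun x => (f x : Matrix (Fin p) (Fin p) ℝ)) (q.subtypeL.comp f') a) :
    HasStrictFDerivAt f f' a := by
  replace h := hasStrictFDerivAt_iff_isLittleO.1 h
  refine hasStrictFDerivAt_iff_isLittleO.2 ?_
  rw [← isLittleO_norm_left] at h ⊢
  exact h

private lemma aux_sylvester_eq_zero {A H : Matrix (Fin p) (Fin p) ℝ} (hA : A.PosDef)
    (hH : H * A + A * H = 0) : H = 0 := by
  have hherm := hA.1
  set U : Matrix (Fin p) (Fin p) ℝ := (hherm.eigenvectorUnitary : Matrix (Fin p) (Fin p) ℝ)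
    with hUdef
  have hU1 : star U * U = 1 := Matrix.mem_unitaryGroup_iff'.mp hherm.eigenvectorUnitary.2
  have hU2 : U * star U = 1 := Matrix.mem_unitaryGroup_iff.mp hherm.eigenvectorUnitary.2
  set D : Matrix (Fin p) (Fin p) ℝ := diagonal (RCLike.ofReal ∘ hherm.eigenvalues) with hDdef
  have hspec : A = U * D * star U := hherm.spectral_theorem
  set K : Matrix (Fin p) (Fin p) ℝ := star U * H * U with hK
  have hAU : A * U = U * D := by
    rw [hspec, mul_assoc, hU1, mul_one]
  have hUA : star U * A = D * star U := by
    rw [hspec, ← mul_assoc, ← mul_assoc, hU1, one_mul]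
  have h0 : star U * (H * A + A * H) * U = 0 := by rw [hH, mul_zero, zero_mul]
  have key : K * D + D * K = 0 := by
    calc K * D + D * K
        = star U * H * (A * U) + (star U * A) * (H * U) := by
          rw [hAU, hUA]; simp only [hK, mul_assoc]
      _ = star U * (H * A + A * H) * U := by simp only [mul_add, add_mul, mul_assoc]
      _ = 0 := h0
  have hKzero : K = 0 := by
    ext i j
    have hthis := congrFun (congrFun key i) j
    rw [hDdef] at hthis
    simp only [Matrix.add_apply, Matrix.mul_diagonal, Matrix.diagonal_mul,
      Matrix.zero_apply, Function.comp_apply, RCLike.ofReal_real_eq_id, id] at hthis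
    have hdi : (0:ℝ) < hherm.eigenvalues i := hA.eigenvalues_pos i
    have hdj : (0:ℝ) < hherm.eigenvalues j := hA.eigenvalues_pos j
    have hsum : K i j * (hherm.eigenvalues j + hherm.eigenvalues i) = 0 := by
      rw [mul_add]; linarith [hthis]
    have hpos : (0:ℝ) < hherm.eigenvalues j + hherm.eigenvalues i := add_pos hdj hdi
    simp only [Matrix.zero_apply]
    rcases mul_eq_zero.mp hsum with h | h
    · exact h
    · exact absurd h hpos.ne'
  have hHK : H = U * K * star U := by
    calc H = (U * star U) * H * (U * star U) := by rw [hU2, one_mul, mul_one]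
      _ = U * (star U * H * U) * star U := by simp only [mul_assoc]
      _ = U * K * star U := by rw [hK]
  rw [hHK, hKzero, mul_zero, zero_mul]

private lemma aux_posDef_of_near {A : Matrix (Fin p) (Fin p) ℝ} (hA : A.PosDef) :
    ∃ ε > 0, ∀ B : Matrix (Fin p) (Fin p) ℝ, B.IsHermitian → ‖B - A‖ < ε → B.PosDef := by
  by_cases hp : ∀ x : Fin p → ℝ, x = 0
  · exact ⟨1, one_pos, fun B hB _ => posDef_iff_dotProduct_mulVec.mpr ⟨hB, fun x hx => absurd (hp x) hx⟩⟩
  push_neg at hp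
  obtain ⟨x₀, hx₀⟩ := hp
  have hq : Continuous fun x : Fin p → ℝ => x ⬝ᵥ A *ᵥ x := by
    have : (fun x : Fin p → ℝ => x ⬝ᵥ A *ᵥ x)
        = fun x : Fin p → ℝ => ∑ i, x i * ∑ j, A i j * x j := rfl
    rw [this]
    refine continuous_finset_sum _ fun i _ => (continuous_apply i).mul ?_
    exact continuous_finset_sum _ fun j _ => continuous_const.mul (continuous_apply j)
  have hsne : (Metric.sphere (0 : Fin p → ℝ) 1).Nonempty := by
    refine ⟨‖x₀‖⁻¹ • x₀, ?_⟩
    simp [norm_smul, inv_mul_cancel₀ (norm_ne_zero_iff.2 hx₀)]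
  obtain ⟨z, hzS, hzmin⟩ :=
    (isCompact_sphere (0 : Fin p → ℝ) 1).exists_isMinOn hsne hq.continuousOn
  set c : ℝ := z ⬝ᵥ A *ᵥ z with hc
  have hz1 : ‖z‖ = 1 := by
    have := hzS
    rwa [Metric.mem_sphere, dist_zero_right] at this
  have hzne : z ≠ 0 := by intro h; rw [h] at hz1; simp at hz1
  have hcpos : 0 < c := by simpa using hA.dotProduct_mulVec_pos hzne
  have hdot : ∀ v w : Fin p → ℝ, |v ⬝ᵥ w| ≤ (p : ℝ) * (‖v‖ * ‖w‖) := by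
    intro v w
    calc |∑ i, v i * w i| ≤ ∑ i, |v i * w i| := Finset.abs_sum_le_sum_abs _ _
      _ ≤ ∑ _i : Fin p, ‖v‖ * ‖w‖ := by
          refine Finset.sum_le_sum fun i _ => ?_
          rw [abs_mul]
          have h1 : |v i| ≤ ‖v‖ := by
            simpa [Real.norm_eq_abs] using norm_le_pi_norm v i
          have h2 : |w i| ≤ ‖w‖ := by
            simpa [Real.norm_eq_abs] using norm_le_pi_norm w i
          exact mul_le_mul h1 h2 (abs_nonneg _) (norm_nonneg _)
      _ = (p : ℝ) * (‖v‖ * ‖w‖) := by simp [Finset.sum_const, Finset.card_univ]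
  have hlower : ∀ x : Fin p → ℝ, c * ‖x‖ ^ 2 ≤ x ⬝ᵥ A *ᵥ x := by
    intro x
    rcases eq_or_ne x 0 with rfl | hx
    · simp
    have hxn : (0:ℝ) < ‖x‖ := norm_pos_iff.2 hx
    have hmem : (‖x‖⁻¹ • x) ∈ Metric.sphere (0 : Fin p → ℝ) 1 := by
      simp [norm_smul, inv_mul_cancel₀ hxn.ne']
    have := hzmin hmem
    have hval : (‖x‖⁻¹ • x) ⬝ᵥ A *ᵥ (‖x‖⁻¹ • x) = ‖x‖⁻¹ * (‖x‖⁻¹ * (x ⬝ᵥ A *ᵥ x)) := by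
      rw [Matrix.mulVec_smul, smul_dotProduct, dotProduct_smul]
      simp [smul_eq_mul]
    have hle : c ≤ ‖x‖⁻¹ * (‖x‖⁻¹ * (x ⬝ᵥ A *ᵥ x)) := by
      rw [← hval]; exact this
    have h2 : c * ‖x‖ ^ 2 ≤ (‖x‖⁻¹ * (‖x‖⁻¹ * (x ⬝ᵥ A *ᵥ x))) * ‖x‖ ^ 2 :=
      mul_le_mul_of_nonneg_right hle (by positivity)
    calc c * ‖x‖ ^ 2 ≤ (‖x‖⁻¹ * (‖x‖⁻¹ * (x ⬝ᵥ A *ᵥ x))) * ‖x‖ ^ 2 := h2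
      _ = x ⬝ᵥ A *ᵥ x := by
          rw [show ‖x‖⁻¹ * (‖x‖⁻¹ * (x ⬝ᵥ A *ᵥ x)) * ‖x‖ ^ 2
              = (x ⬝ᵥ A *ᵥ x) * (‖x‖⁻¹ * ‖x‖) ^ 2 by ring,
            inv_mul_cancel₀ hxn.ne', one_pow, mul_one]
  refine ⟨c / ((p : ℝ) + 1), by positivity, fun B hB hBA => posDef_iff_dotProduct_mulVec.mpr ⟨hB, fun x hx => ?_⟩⟩
  have hxn : (0:ℝ) < ‖x‖ := norm_pos_iff.2 hx
  have hsplit : x ⬝ᵥ B *ᵥ x = x ⬝ᵥ A *ᵥ x + x ⬝ᵥ (B - A) *ᵥ x := by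
    rw [Matrix.sub_mulVec, dotProduct_sub]; ring
  have hbound : |x ⬝ᵥ (B - A) *ᵥ x| ≤ (p : ℝ) * (‖x‖ * (‖B - A‖ * ‖x‖)) := by
    refine le_trans (hdot x ((B - A) *ᵥ x)) ?_
    have := Matrix.linfty_opNorm_mulVec (B - A) x
    have hmul : ‖x‖ * ‖(B - A) *ᵥ x‖ ≤ ‖x‖ * (‖B - A‖ * ‖x‖) :=
      mul_le_mul_of_nonneg_left this (norm_nonneg _)
    exact mul_le_mul_of_nonneg_left hmul (Nat.cast_nonneg p)
  have hnormBA : (0:ℝ) ≤ ‖B - A‖ := norm_nonneg _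
  have hkey : (p : ℝ) * ‖B - A‖ < c := by
    have h1 : (p : ℝ) * ‖B - A‖ ≤ (p : ℝ) * (c / ((p : ℝ) + 1)) :=
      mul_le_mul_of_nonneg_left hBA.le (Nat.cast_nonneg p)
    have h2 : (p : ℝ) * (c / ((p : ℝ) + 1)) < c := by
      rw [div_eq_inv_mul]
      have hp1 : (0:ℝ) < (p : ℝ) + 1 := by positivity
      rw [show (p : ℝ) * (((p:ℝ)+1)⁻¹ * c) = ((p:ℝ) / ((p:ℝ)+1)) * c by field_simp]
      have : (p : ℝ) / ((p:ℝ)+1) < 1 := by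
        rw [div_lt_one hp1]; linarith
      nlinarith
    exact lt_of_le_of_lt h1 h2
  have hlow := hlower x
  have habs : -((p : ℝ) * (‖x‖ * (‖B - A‖ * ‖x‖))) ≤ x ⬝ᵥ (B - A) *ᵥ x :=
    neg_le_of_abs_le hbound
  have hfinal : 0 < x ⬝ᵥ B *ᵥ x := by
    rw [hsplit]
    have hx2 : (0:ℝ) < ‖x‖ ^ 2 := by positivity
    nlinarith [sq_nonneg ‖x‖]
  simpa using hfinal

end Aux

/-- Let `I ⊆ ℝ` be an open interval and `R : I → ℝ^{p×p}` a differentiable map (with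
derivative `R'`, expressed entrywise) such that `R t` is symmetric positive definite for
every `t ∈ I`. Let `S t = R(t)^{-1/2}` (characterized as the unique symmetric positive
definite matrix with `S t * S t = (R t)⁻¹`). Then `S` is differentiable on `I`, `S t` is
symmetric, and its derivative `S'` is the symmetric solution of the Sylvester equation
`S' S + S S' = −R⁻¹ R' R⁻¹`. -/
theorem deriv_inv_sqrt_sylvester {p : ℕ} (I : Set ℝ) (hIopen : IsOpen I)
    (hIinterval : I.OrdConnected)
    (R R' S : ℝ → Matrix (Fin p) (Fin p) ℝ)
    (hRderiv : ∀ t ∈ I, ∀ i j, HasDerivAt (fun s => R s i j) (R' t i j) t)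
    (hRpos : ∀ t ∈ I, (R t).PosDef)
    (hSpos : ∀ t ∈ I, (S t).PosDef)
    (hSsq : ∀ t ∈ I, S t * S t = (R t)⁻¹) :
    ∀ t ∈ I, (S t)ᵀ = S t ∧
      ∃ S' : Matrix (Fin p) (Fin p) ℝ,
        (∀ i j, HasDerivAt (fun s => S s i j) (S' i j) t) ∧
        S'ᵀ = S' ∧
        S' * S t + S t * S' = -((R t)⁻¹ * R' t * (R t)⁻¹) := by
  classical
  have hSsymm : ∀ s ∈ I, (S s)ᵀ = S s := fun s hs => by
    have := (hSpos s hs).1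
    rwa [Matrix.IsHermitian, conjTranspose_eq_transpose_of_trivial] at this
  have hRsymm : ∀ s ∈ I, (R s)ᵀ = R s := fun s hs => by
    have := (hRpos s hs).1
    rwa [Matrix.IsHermitian, conjTranspose_eq_transpose_of_trivial] at this
  intro t ht
  refine ⟨hSsymm t ht, ?_⟩
  -- derivative of R as a matrix-valued function
  have hR : HasDerivAt R (R' t) t := aux_hasDerivAt_of_entries (hRderiv t ht)
  -- R' t is symmetric
  have hR'symm : (R' t)ᵀ = R' t := by
    ext i j
    have h1 : HasDerivAt (fun s => R s j i) (R' t j i) t := hRderiv t ht j i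
    have h2 : HasDerivAt (fun s => R s j i) (R' t i j) t := by
      refine (hRderiv t ht i j).congr_of_eventuallyEq ?_
      filter_upwards [hIopen.eventually_mem ht] with s hs
      have := congrFun (congrFun (hRsymm s hs) j) i
      simpa [Matrix.transpose_apply] using this.symm
    have huniq : R' t j i = R' t i j := h1.unique h2
    simpa [Matrix.transpose_apply] using huniq
  -- derivative of s ↦ (R s)⁻¹
  have hRunit : IsUnit (R t) := (hRpos t ht).isUnit
  have hinvR : HasDerivAt (fun s => (R s)⁻¹) (-((R t)⁻¹ * R' t * (R t)⁻¹)) t := by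
    obtain ⟨u, hu⟩ := hRunit
    have h1 : HasFDerivAt Ring.inverse
        (-ContinuousLinearMap.mulLeftRight ℝ _ (↑u⁻¹) (↑u⁻¹)) (R t) := by
      rw [← hu]; exact hasFDerivAt_ringInverse u
    have h2 := h1.comp_hasDerivAt t hR
    have hu' : (↑u⁻¹ : Matrix (Fin p) (Fin p) ℝ) = (R t)⁻¹ := by
      rw [Matrix.nonsing_inv_eq_ringInverse, ← hu, Ring.inverse_unit]
    have heq : (fun s => Ring.inverse (R s)) = fun s => (R s)⁻¹ := by
      funext s; rw [Matrix.nonsing_inv_eq_ringInverse]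
    simp only [Function.comp_def] at h2
    rw [heq] at h2
    refine h2.congr_deriv ?_
    simp [hu', ContinuousLinearMap.mulLeftRight_apply]
  have hRinvsymm : ∀ s ∈ I, ((R s)⁻¹)ᵀ = (R s)⁻¹ := fun s hs => by
    rw [Matrix.transpose_nonsing_inv, hRsymm s hs]
  set d' : Matrix (Fin p) (Fin p) ℝ := -((R t)⁻¹ * R' t * (R t)⁻¹) with hd'def
  have hd'symm : d'ᵀ = d' := by
    rw [hd'def, Matrix.transpose_neg, Matrix.transpose_mul, Matrix.transpose_mul,
      hRinvsymm t ht, hR'symm, ← mul_assoc]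
  -- the submodule of symmetric matrices
  let Q : Submodule ℝ (Matrix (Fin p) (Fin p) ℝ) :=
    { carrier := {B | Bᵀ = B}
      add_mem' := fun {a b} ha hb => by
        simp only [Set.mem_setOf_eq] at *
        rw [Matrix.transpose_add, ha, hb]
      zero_mem' := by simp [Set.mem_setOf_eq]
      smul_mem' := fun c {x} hx => by
        simp only [Set.mem_setOf_eq] at *
        rw [Matrix.transpose_smul, hx] }
  have hmemQ : ∀ B : Matrix (Fin p) (Fin p) ℝ, B ∈ Q ↔ Bᵀ = B := fun B => Iff.rfl
  set A : Matrix (Fin p) (Fin p) ℝ := S t with hAdef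
  have hA : A.PosDef := hSpos t ht
  have hAQ : A ∈ Q := (hmemQ A).2 (hSsymm t ht)
  set a : Q := ⟨A, hAQ⟩ with hadef
  -- the Sylvester operator on Q
  have hAsymm : Aᵀ = A := (hmemQ A).1 hAQ
  have hsylmem : ∀ H : Q, (H : Matrix (Fin p) (Fin p) ℝ) * A + A * (H : Matrix (Fin p) (Fin p) ℝ) ∈ Q := fun H => by
    have hh : (H : Matrix (Fin p) (Fin p) ℝ)ᵀ = H := (hmemQ _).1 H.2
    refine (hmemQ _).2 ?_
    rw [Matrix.transpose_add, Matrix.transpose_mul, Matrix.transpose_mul, hh,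
      hAsymm, add_comm]
  let Llin : Q →ₗ[ℝ] Q :=
    { toFun := fun H => ⟨(H : Matrix (Fin p) (Fin p) ℝ) * A + A * H, hsylmem H⟩
      map_add' := fun H₁ H₂ => by
        apply Subtype.ext
        show (((H₁ : Matrix (Fin p) (Fin p) ℝ) + H₂) * A + A * ((H₁ : Matrix (Fin p) (Fin p) ℝ) + H₂)) = _
        simp only [add_mul, mul_add, Submodule.coe_add]
        abel
      map_smul' := fun c H => by
        apply Subtype.ext
        show ((c • (H : Matrix (Fin p) (Fin p) ℝ)) * A + A * (c • (H : Matrix (Fin p) (Fin p) ℝ))) = _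
        simp only [smul_add, smul_mul_assoc, mul_smul_comm, RingHom.id_apply,
          Submodule.coe_smul] }
  have hLinj : Function.Injective Llin := by
    refine (injective_iff_map_eq_zero Llin).2 fun H hH0 => ?_
    have hcoe : (H : Matrix (Fin p) (Fin p) ℝ) * A + A * (H : Matrix (Fin p) (Fin p) ℝ) = 0 :=
      congrArg Subtype.val hH0
    exact Subtype.ext (aux_sylvester_eq_zero hA hcoe)
  have hLbij : Function.Bijective Llin := ⟨hLinj, LinearMap.injective_iff_surjective.mp hLinj⟩
  let Lequiv : Q ≃L[ℝ] Q := (LinearEquiv.ofBijective Llin hLbij).toContinuousLinearEquiv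
  -- squaring map on Q
  have hsqmem : ∀ X : Q, (X : Matrix (Fin p) (Fin p) ℝ) * (X : Matrix (Fin p) (Fin p) ℝ) ∈ Q :=
    fun X => by
    refine (hmemQ _).2 ?_
    rw [Matrix.transpose_mul, (hmemQ _).1 X.2]
  let Φ : Q → Q := fun X =>
    ⟨(X : Matrix (Fin p) (Fin p) ℝ) * (X : Matrix (Fin p) (Fin p) ℝ), hsqmem X⟩
  have hΦ : HasStrictFDerivAt Φ (Lequiv : Q →L[ℝ] Q) a := by
    apply aux_hasStrictFDerivAt_codRestrict
    have hcoe : HasStrictFDerivAt (fun X : Q => (X : Matrix (Fin p) (Fin p) ℝ))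
        Q.subtypeL a := Q.subtypeL.hasStrictFDerivAt
    have hmul := hcoe.mul' hcoe
    have heq : ((a : Matrix (Fin p) (Fin p) ℝ) • Q.subtypeL
        + Q.subtypeL.smulRight (a : Matrix (Fin p) (Fin p) ℝ))
        = Q.subtypeL.comp (Lequiv : Q →L[ℝ] Q) := by
      ext H
      simp only [ContinuousLinearMap.add_apply, ContinuousLinearMap.smul_apply,
        ContinuousLinearMap.smulRight_apply, ContinuousLinearMap.coe_comp',
        Function.comp_apply, Submodule.subtypeL_apply, smul_eq_mul]
      have hrfl : ((Lequiv : Q →L[ℝ] Q) H : Matrix (Fin p) (Fin p) ℝ)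
          = (H : Matrix (Fin p) (Fin p) ℝ) * A + A * H := rfl
      rw [hrfl]
      exact add_comm _ _
    exact heq ▸ hmul
  -- local inverse of the squaring map
  let g : Q → Q := hΦ.localInverse Φ Lequiv a
  have hg_deriv : HasStrictFDerivAt g (Lequiv.symm : Q →L[ℝ] Q) (Φ a) := hΦ.to_localInverse
  have hg_right : ∀ᶠ y in 𝓝 (Φ a), Φ (g y) = y := hΦ.eventually_right_inverse
  have hg_at : g (Φ a) = a := hΦ.localInverse_apply_image
  -- symmetrized inverse of R, as a map into Q
  have hQsmem : ∀ s : ℝ, (2⁻¹ : ℝ) • ((R s)⁻¹ + ((R s)⁻¹)ᵀ) ∈ Q := fun s => by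
    refine (hmemQ _).2 ?_
    rw [Matrix.transpose_smul, Matrix.transpose_add, Matrix.transpose_transpose, add_comm]
  let Qs : ℝ → Q := fun s => ⟨(2⁻¹ : ℝ) • ((R s)⁻¹ + ((R s)⁻¹)ᵀ), hQsmem s⟩
  have hQsI : ∀ s ∈ I, (Qs s : Matrix (Fin p) (Fin p) ℝ) = (R s)⁻¹ := fun s hs => by
    show (2⁻¹ : ℝ) • ((R s)⁻¹ + ((R s)⁻¹)ᵀ) = _
    rw [hRinvsymm s hs, ← two_smul ℝ ((R s)⁻¹), smul_smul]
    norm_num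
  have hΦa : Φ a = Qs t := by
    apply Subtype.ext
    show A * A = ((Qs t : Q) : Matrix (Fin p) (Fin p) ℝ)
    rw [hQsI t ht]
    exact hSsq t ht
  have hd'Q : d' ∈ Q := (hmemQ _).2 hd'symm
  -- derivative of Qs
  have hQs_deriv : HasDerivAt Qs (⟨d', hd'Q⟩ : Q) t := by
    apply aux_hasDerivAt_codRestrict
    have h1 : HasDerivAt (fun s => ((R s)⁻¹)ᵀ) d'ᵀ t := by
      apply aux_hasDerivAt_of_entries
      intro i j
      exact aux_entry_hasDerivAt hinvR j i
    have h2 := HasDerivAt.const_smul (2⁻¹ : ℝ) (hinvR.add h1)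
    have hval : (2⁻¹ : ℝ) • (d' + d'ᵀ) = d' := by
      rw [hd'symm, ← two_smul ℝ d', smul_smul]; norm_num
    rw [hval] at h2
    exact h2
  -- the local solution and its derivative
  have hXd : HasDerivAt (fun s => g (Qs s)) (Lequiv.symm ⟨d', hd'Q⟩) t := by
    have hgF : HasFDerivAt g (Lequiv.symm : Q →L[ℝ] Q) (Qs t) := by
      rw [← hΦa]; exact hg_deriv.hasFDerivAt
    exact hgF.comp_hasDerivAt t hQs_deriv
  obtain ⟨ε, hε, hball⟩ := aux_posDef_of_near hA
  have he1 : ∀ᶠ s in 𝓝 t, s ∈ I := hIopen.eventually_mem ht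
  have hQscont : ContinuousAt Qs t := hQs_deriv.continuousAt
  have he2 : ∀ᶠ s in 𝓝 t, Φ (g (Qs s)) = Qs s := by
    have h := hg_right
    rw [hΦa] at h
    exact hQscont.eventually h
  have hXtend : Tendsto (fun s => (g (Qs s) : Matrix (Fin p) (Fin p) ℝ)) (𝓝 t) (𝓝 A) := by
    have h1 : Tendsto (fun s => g (Qs s)) (𝓝 t) (𝓝 (g (Qs t))) := hXd.continuousAt
    have h2 : g (Qs t) = a := by rw [← hΦa, hg_at]
    rw [h2] at h1
    exact (continuous_subtype_val.tendsto a).comp h1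
  have he3 : ∀ᶠ s in 𝓝 t, ‖(g (Qs s) : Matrix (Fin p) (Fin p) ℝ) - A‖ < ε := by
    have hb := hXtend (Metric.ball_mem_nhds A hε)
    filter_upwards [hb] with s hs
    simpa [Metric.mem_ball, dist_eq_norm] using hs
  have hev : S =ᶠ[𝓝 t] fun s => (g (Qs s) : Matrix (Fin p) (Fin p) ℝ) := by
    filter_upwards [he1, he2, he3] with s hs1 hs2 hs3
    have hBsym : ((g (Qs s) : Matrix (Fin p) (Fin p) ℝ))ᵀ
        = (g (Qs s) : Matrix (Fin p) (Fin p) ℝ) := (hmemQ _).1 (g (Qs s)).2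
    have hBherm : ((g (Qs s) : Matrix (Fin p) (Fin p) ℝ)).IsHermitian := by
      rw [Matrix.IsHermitian, conjTranspose_eq_transpose_of_trivial]; exact hBsym
    have hBpos := hball _ hBherm hs3
    have hBsq : (g (Qs s) : Matrix (Fin p) (Fin p) ℝ) * (g (Qs s) : Matrix (Fin p) (Fin p) ℝ)
        = (R s)⁻¹ := by
      have hc := congrArg Subtype.val hs2
      rw [← hQsI s hs1]
      exact hc
    have hsq2 : S s ^ 2 = (g (Qs s) : Matrix (Fin p) (Fin p) ℝ) ^ 2 := by
      rw [pow_two, pow_two, hSsq s hs1, hBsq]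
    exact aux_eq_of_sq_eq_sq (hSpos s hs1).posSemidef hBpos.posSemidef hsq2
  set S'q : Q := Lequiv.symm ⟨d', hd'Q⟩ with hS'q
  have hS_deriv : HasDerivAt S ((S'q : Matrix (Fin p) (Fin p) ℝ)) t := by
    have h1 : HasDerivAt (fun s => (g (Qs s) : Matrix (Fin p) (Fin p) ℝ))
        ((S'q : Matrix (Fin p) (Fin p) ℝ)) t :=
      Q.subtypeL.hasFDerivAt.comp_hasDerivAt t hXd
    exact h1.congr_of_eventuallyEq hev
  refine ⟨(S'q : Matrix (Fin p) (Fin p) ℝ), fun i j => aux_entry_hasDerivAt hS_deriv i j,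
    (hmemQ _).1 S'q.2, ?_⟩
  have h1 : HasDerivAt (fun s => S s * S s)
      ((S'q : Matrix (Fin p) (Fin p) ℝ) * S t + S t * (S'q : Matrix (Fin p) (Fin p) ℝ)) t :=
    hS_deriv.mul hS_deriv
  have h2 : HasDerivAt (fun s => S s * S s) d' t := by
    refine hinvR.congr_of_eventuallyEq ?_
    filter_upwards [he1] with s hs
    exact hSsq s hs
  exact h1.unique h2
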